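/- Let (A,Δ) be an algebraic quantum group with dual counit ε̂ on Â. Then for every ω ∈ A' and a ∈ A (with ωa, aω ∈ M(Â)): ε̂(ωa) = ω(a) and ε̂(aω) = ω(a). -/

import Mathlib

open TensorProduct LinearMap

noncomputable section

/-- Slice on the left leg: `sliceL θ (x ⊗ y) = θ x • y`, i.e. `(θ ⊙ ι)`. -/
def sliceL {M N : Type*} [AddCommGroup M] [Module ℂ M] [AddCommGroup N] [Module ℂ N]
    (θ : M →ₗ[ℂ] ℂ) : M ⊗[ℂ] N →ₗ[ℂ] N :=
  TensorProduct.lift (LinearMap.lsmul ℂ N ∘ₗ θ)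

/-- Slice on the right leg: `sliceR θ (x ⊗ y) = θ y • x`, i.e. `(ι ⊙ θ)`. -/
def sliceR {M N : Type*} [AddCommGroup M] [Module ℂ M] [AddCommGroup N] [Module ℂ N]
    (θ : N →ₗ[ℂ] ℂ) : M ⊗[ℂ] N →ₗ[ℂ] M :=
  TensorProduct.lift ((LinearMap.lsmul ℂ M ∘ₗ θ).flip)

/-- An algebraic quantum group: a regular multiplier Hopf algebra `(A, Δ)` with a
(faithful) left invariant functional `φ`.  The comultiplication is encoded through the
canonical bijections `T1 a ⊗ b = Δ(a)(b ⊗ 1)`, `T2 (a ⊗ b) = Δ(a)(1 ⊗ b)`,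
`T3 (a ⊗ b) = (b ⊗ 1)Δ(a)`, `T4 (a ⊗ b) = (1 ⊗ b)Δ(a)` together with the left and right
multiplication operators `ΔL a`/`ΔR a` by `Δ(a)` on `A ⊗ A`. -/
structure AQG (A : Type*) [NonUnitalRing A] [Module ℂ A]
    [SMulCommClass ℂ A A] [IsScalarTower ℂ A A] where
  T1 : A ⊗[ℂ] A ≃ₗ[ℂ] A ⊗[ℂ] A
  T2 : A ⊗[ℂ] A ≃ₗ[ℂ] A ⊗[ℂ] A
  T3 : A ⊗[ℂ] A ≃ₗ[ℂ] A ⊗[ℂ] A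
  T4 : A ⊗[ℂ] A ≃ₗ[ℂ] A ⊗[ℂ] A
  counit : A →ₗ[ℂ] ℂ
  S : A ≃ₗ[ℂ] A
  phi : A →ₗ[ℂ] ℂ
  rho : A ≃ₗ[ℂ] A
  ΔL : A →ₗ[ℂ] (A ⊗[ℂ] A →ₗ[ℂ] A ⊗[ℂ] A)
  ΔR : A →ₗ[ℂ] (A ⊗[ℂ] A →ₗ[ℂ] A ⊗[ℂ] A)
  /- non-degeneracy of the algebra `A` -/
  nondeg_l : ∀ a : A, (∀ b : A, a * b = 0) → a = 0
  nondeg_r : ∀ a : A, (∀ b : A, b * a = 0) → a = 0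
  /- the counit is a non-zero homomorphism with `(ε ⊙ ι)Δ = (ι ⊙ ε)Δ = ι` -/
  counit_mul : ∀ a b : A, counit (a * b) = counit a * counit b
  counit_ne : counit ≠ 0
  counit_T1 : ∀ a b : A, sliceR counit (T1 (a ⊗ₜ b)) = a * b
  counit_T2 : ∀ a b : A, sliceL counit (T2 (a ⊗ₜ b)) = a * b
  counit_T3 : ∀ a b : A, sliceR counit (T3 (a ⊗ₜ b)) = b * a
  counit_T4 : ∀ a b : A, sliceL counit (T4 (a ⊗ₜ b)) = b * a
  /- the antipode -/
  S_mul : ∀ a b : A, S (a * b) = S b * S a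
  antipode_l : ∀ a b : A,
    LinearMap.mul' ℂ A (LinearMap.rTensor A S.toLinearMap (T2 (a ⊗ₜ b))) = counit a • b
  antipode_r : ∀ a b : A,
    LinearMap.mul' ℂ A (LinearMap.lTensor A S.toLinearMap (T3 (a ⊗ₜ b))) = counit a • b
  /- `φ` is a faithful left invariant functional -/
  phi_ne : phi ≠ 0
  phi_faithful_l : ∀ a : A, (∀ b : A, phi (a * b) = 0) → a = 0
  phi_faithful_r : ∀ a : A, (∀ b : A, phi (b * a) = 0) → a = 0
  left_inv_T1 : ∀ a b : A, sliceR phi (T1 (a ⊗ₜ b)) = phi a • b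
  left_inv_T3 : ∀ a b : A, sliceR phi (T3 (a ⊗ₜ b)) = phi a • b
  /- the weak KMS automorphism `ρ`: `φ(ab) = φ(b ρ(a))` -/
  rho_mul : ∀ a b : A, rho (a * b) = rho a * rho b
  phi_kms : ∀ a b : A, phi (a * b) = phi (b * rho a)
  /- `Δ` is a (non-degenerate) homomorphism into `M(A ⊗ A)` -/
  ΔL_mul : ∀ (a b : A) (z : A ⊗[ℂ] A), ΔL (a * b) z = ΔL a (ΔL b z)
  ΔR_mul : ∀ (a b : A) (z : A ⊗[ℂ] A), ΔR (a * b) z = ΔR b (ΔR a z)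
  ΔL_assoc : ∀ (a : A) (z w : A ⊗[ℂ] A), ΔL a (z * w) = ΔL a z * w
  ΔR_assoc : ∀ (a : A) (z w : A ⊗[ℂ] A), ΔR a (z * w) = z * ΔR a w
  ΔLR : ∀ (a : A) (z w : A ⊗[ℂ] A), ΔR a z * w = z * ΔL a w
  ΔL_T1 : ∀ (a b : A) (z : A ⊗[ℂ] A),
    T1 (a ⊗ₜ b) * z = ΔL a (TensorProduct.map (LinearMap.mulLeft ℂ b) LinearMap.id z)
  ΔL_T2 : ∀ (a b : A) (z : A ⊗[ℂ] A),
    T2 (a ⊗ₜ b) * z = ΔL a (TensorProduct.map LinearMap.id (LinearMap.mulLeft ℂ b) z)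
  ΔR_T3 : ∀ (a b : A) (z : A ⊗[ℂ] A),
    z * T3 (a ⊗ₜ b) = ΔR a (TensorProduct.map (LinearMap.mulRight ℂ b) LinearMap.id z)
  ΔR_T4 : ∀ (a b : A) (z : A ⊗[ℂ] A),
    z * T4 (a ⊗ₜ b) = ΔR a (TensorProduct.map LinearMap.id (LinearMap.mulRight ℂ b) z)
  /- coassociativity of `Δ` -/
  coassoc : ∀ a b c : A,
    (TensorProduct.assoc ℂ A A A)
        (LinearMap.rTensor A (T3.toLinearMap ∘ₗ (TensorProduct.mk ℂ A A).flip a)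
          (T2 (c ⊗ₜ b)))
      = LinearMap.lTensor A (T2.toLinearMap ∘ₗ (TensorProduct.mk ℂ A A).flip b)
          (T3 (c ⊗ₜ a))

namespace AQG

variable {A : Type*} [NonUnitalRing A] [Module ℂ A]
  [SMulCommClass ℂ A A] [IsScalarTower ℂ A A] (H : AQG A)

/-- The functional `φa : x ↦ φ(x a)`; the dual algebra is `Â = {φa : a ∈ A}`. -/
def lFun (a : A) : A →ₗ[ℂ] ℂ := H.phi ∘ₗ LinearMap.mulRight ℂ a

/-- The functional `aφ : x ↦ φ(a x)`; also `Â = {aφ : a ∈ A}`. -/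
def rFun (a : A) : A →ₗ[ℂ] ℂ := H.phi ∘ₗ LinearMap.mulLeft ℂ a

/-- The right invariant functional `ψ = φ ∘ S`. -/
def psi : A →ₗ[ℂ] ℂ := H.phi ∘ₗ H.S.toLinearMap

/-- The functional `ψa : x ↦ ψ(x a)`. -/
def lFunPsi (a : A) : A →ₗ[ℂ] ℂ := H.psi ∘ₗ LinearMap.mulRight ℂ a

/-- The right action of `Â` on `A'`: `Ract θ a = θ · (φa)`,
`(θ (φa))(x) = θ((ι ⊙ φa)Δ(x)) = θ((ι ⊙ φ)(Δ(x)(1 ⊗ a)))`. -/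
def Ract (θ : A →ₗ[ℂ] ℂ) (a : A) : A →ₗ[ℂ] ℂ :=
  θ ∘ₗ sliceR H.phi ∘ₗ H.T2.toLinearMap ∘ₗ (TensorProduct.mk ℂ A A).flip a

/-- The left action of `Â` on `A'`: `Lact θ a = (φa) · θ`,
`((φa) θ)(x) = θ((φa ⊙ ι)Δ(x)) = θ((φ ⊙ ι)(Δ(x)(a ⊗ 1)))`. -/
def Lact (θ : A →ₗ[ℂ] ℂ) (a : A) : A →ₗ[ℂ] ℂ :=
  θ ∘ₗ sliceL H.phi ∘ₗ H.T1.toLinearMap ∘ₗ (TensorProduct.mk ℂ A A).flip a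

/-- `c = (ι ⊙ θ)Δ(x)` as an element of `A` (a priori it is only a multiplier). -/
def IsRSlice (θ : A →ₗ[ℂ] ℂ) (x c : A) : Prop :=
  (∀ b : A, c * b = sliceR θ (H.T1 (x ⊗ₜ b))) ∧
  (∀ b : A, b * c = sliceR θ (H.T3 (x ⊗ₜ b)))

/-- `c = (θ ⊙ ι)Δ(x)` as an element of `A`. -/
def IsLSlice (θ : A →ₗ[ℂ] ℂ) (x c : A) : Prop :=
  (∀ b : A, c * b = sliceL θ (H.T2 (x ⊗ₜ b))) ∧
  (∀ b : A, b * c = sliceL θ (H.T4 (x ⊗ₜ b)))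

/-- `θ ∈ M(Â)`: all slices `(θ ⊙ ι)Δ(x)` and `(ι ⊙ θ)Δ(x)` belong to `A`. -/
def HasSlices (θ : A →ₗ[ℂ] ℂ) : Prop :=
  ∀ x : A, (∃ c, H.IsRSlice θ x c) ∧ (∃ c, H.IsLSlice θ x c)

end AQG

end

/-! ### Auxiliary machinery for the proof -/

noncomputable section

namespace AQGProof

open TensorProduct LinearMap

section Generic

variable {M N P Q : Type*} [AddCommGroup M] [Module ℂ M] [AddCommGroup N] [Module ℂ N]
  [AddCommGroup P] [Module ℂ P] [AddCommGroup Q] [Module ℂ Q]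

@[simp] lemma sliceR_tmul (θ : N →ₗ[ℂ] ℂ) (u : M) (v : N) :
    sliceR θ (u ⊗ₜ[ℂ] v) = θ v • u := rfl

@[simp] lemma sliceL_tmul (θ : M →ₗ[ℂ] ℂ) (u : M) (v : N) :
    sliceL θ (u ⊗ₜ[ℂ] v) = θ u • v := rfl

lemma sliceR_map (θ : Q →ₗ[ℂ] ℂ) (g : M →ₗ[ℂ] P) (h : N →ₗ[ℂ] Q) (Z : M ⊗[ℂ] N) :
    sliceR θ (TensorProduct.map g h Z) = g (sliceR (θ ∘ₗ h) Z) := by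
  induction Z using TensorProduct.induction_on with
  | zero => simp
  | tmul u v => simp
  | add x y hx hy => simp [hx, hy]

lemma sliceL_map (θ : P →ₗ[ℂ] ℂ) (g : M →ₗ[ℂ] P) (h : N →ₗ[ℂ] Q) (Z : M ⊗[ℂ] N) :
    sliceL θ (TensorProduct.map g h Z) = h (sliceL (θ ∘ₗ g) Z) := by
  induction Z using TensorProduct.induction_on with
  | zero => simp
  | tmul u v => simp
  | add x y hx hy => simp [hx, hy]

/-- Separation: if all right slices vanish, the tensor vanishes. -/
lemma sep_r (W : M ⊗[ℂ] N) (h : ∀ θ : N →ₗ[ℂ] ℂ, sliceR θ W = 0) : W = 0 := by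
  classical
  let c := Module.Basis.ofVectorSpace ℂ N
  have key : ∀ i, TensorProduct.finsuppScalarRight ℂ ℂ M (Module.Basis.ofVectorSpaceIndex ℂ N)
      ((TensorProduct.congr (LinearEquiv.refl ℂ M) c.repr) W) i = 0 := by
    intro i
    have : ∀ (W : M ⊗[ℂ] N),
        TensorProduct.finsuppScalarRight ℂ ℂ M (Module.Basis.ofVectorSpaceIndex ℂ N)
          ((TensorProduct.congr (LinearEquiv.refl ℂ M) c.repr) W) i
        = sliceR (c.coord i) W := by
      intro W
      induction W using TensorProduct.induction_on with
      | zero => simp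
      | tmul u v =>
          simp [TensorProduct.congr_tmul, TensorProduct.finsuppScalarRight_apply_tmul_apply,
            Module.Basis.coord_apply]
      | add x y hx hy => simp [hx, hy]
    rw [this, h]
  have h0 : TensorProduct.finsuppScalarRight ℂ ℂ M (Module.Basis.ofVectorSpaceIndex ℂ N)
      ((TensorProduct.congr (LinearEquiv.refl ℂ M) c.repr) W) = 0 := by
    ext i; exact key i
  rw [LinearEquiv.map_eq_zero_iff] at h0
  rw [LinearEquiv.map_eq_zero_iff] at h0
  exact h0

lemma sliceL_eq_sliceR_comm (θ : M →ₗ[ℂ] ℂ) (W : M ⊗[ℂ] N) :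
    sliceL θ W = sliceR θ ((TensorProduct.comm ℂ M N) W) := by
  induction W using TensorProduct.induction_on with
  | zero => simp
  | tmul u v => simp
  | add x y hx hy => simp [hx, hy]

lemma sep_l (W : M ⊗[ℂ] N) (h : ∀ θ : M →ₗ[ℂ] ℂ, sliceL θ W = 0) : W = 0 := by
  have := sep_r ((TensorProduct.comm ℂ M N) W) (fun θ => by
    rw [← sliceL_eq_sliceR_comm]; exact h θ)
  exact (TensorProduct.comm ℂ M N).injective (by simpa using this)

lemma sep_r_eq (W W' : M ⊗[ℂ] N) (h : ∀ θ : N →ₗ[ℂ] ℂ, sliceR θ W = sliceR θ W') :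
    W = W' := by
  have := sep_r (W - W') (fun θ => by rw [map_sub, h, sub_self])
  exact sub_eq_zero.mp this

lemma sep_l_eq (W W' : M ⊗[ℂ] N) (h : ∀ θ : M →ₗ[ℂ] ℂ, sliceL θ W = sliceL θ W') :
    W = W' := by
  have := sep_l (W - W') (fun θ => by rw [map_sub, h, sub_self])
  exact sub_eq_zero.mp this

/-- Evaluation of a pair of functionals against a tensor. -/
def ev2 (θ₁ : M →ₗ[ℂ] ℂ) (θ₂ : N →ₗ[ℂ] ℂ) : M ⊗[ℂ] N →ₗ[ℂ] ℂ :=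
  (LinearMap.mul' ℂ ℂ) ∘ₗ TensorProduct.map θ₁ θ₂

@[simp] lemma ev2_tmul (θ₁ : M →ₗ[ℂ] ℂ) (θ₂ : N →ₗ[ℂ] ℂ) (u : M) (v : N) :
    ev2 θ₁ θ₂ (u ⊗ₜ[ℂ] v) = θ₁ u * θ₂ v := by
  simp [ev2]

lemma ev2_map (θ₁ : P →ₗ[ℂ] ℂ) (θ₂ : Q →ₗ[ℂ] ℂ) (g : M →ₗ[ℂ] P) (h : N →ₗ[ℂ] Q)
    (Z : M ⊗[ℂ] N) : ev2 θ₁ θ₂ (TensorProduct.map g h Z) = ev2 (θ₁ ∘ₗ g) (θ₂ ∘ₗ h) Z := by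
  induction Z using TensorProduct.induction_on with
  | zero => simp
  | tmul u v => simp
  | add x y hx hy => simp [hx, hy]

lemma ev2_eq_sliceR (θ₁ : M →ₗ[ℂ] ℂ) (θ₂ : N →ₗ[ℂ] ℂ) (Z : M ⊗[ℂ] N) :
    ev2 θ₁ θ₂ Z = θ₁ (sliceR θ₂ Z) := by
  induction Z using TensorProduct.induction_on with
  | zero => simp
  | tmul u v => simp [mul_comm]
  | add x y hx hy => simp [hx, hy]

lemma ev2_eq_sliceL (θ₁ : M →ₗ[ℂ] ℂ) (θ₂ : N →ₗ[ℂ] ℂ) (Z : M ⊗[ℂ] N) :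
    ev2 θ₁ θ₂ Z = θ₂ (sliceL θ₁ Z) := by
  induction Z using TensorProduct.induction_on with
  | zero => simp
  | tmul u v => simp [mul_comm]
  | add x y hx hy => simp [hx, hy]

end Generic

end AQGProof

end

noncomputable section

namespace AQGProof

open TensorProduct LinearMap

section Mul

variable {A : Type*} [NonUnitalRing A] [Module ℂ A]
  [SMulCommClass ℂ A A] [IsScalarTower ℂ A A]

lemma p1 (a : A) (W z : A ⊗[ℂ] A) :
    (TensorProduct.map (mulLeft ℂ a) LinearMap.id W) * z
      = TensorProduct.map (mulLeft ℂ a) LinearMap.id (W * z) := by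
  induction W using TensorProduct.induction_on with
  | zero => simp
  | tmul u v =>
      induction z using TensorProduct.induction_on with
      | zero => simp
      | tmul p q => simp [Algebra.TensorProduct.tmul_mul_tmul, mul_assoc]
      | add x y hx hy => simp only [mul_add, map_add, hx, hy]
  | add x y hx hy => simp only [add_mul, map_add, hx, hy]

lemma p2 (b : A) (W z : A ⊗[ℂ] A) :
    z * (TensorProduct.map LinearMap.id (mulRight ℂ b) W)
      = TensorProduct.map LinearMap.id (mulRight ℂ b) (z * W) := by
  induction W using TensorProduct.induction_on with
  | zero => simp
  | tmul u v =>
      induction z using TensorProduct.induction_on with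
      | zero => simp
      | tmul p q => simp [Algebra.TensorProduct.tmul_mul_tmul, mul_assoc]
      | add x y hx hy => simp only [add_mul, map_add, hx, hy]
  | add x y hx hy => simp only [mul_add, map_add, hx, hy]

lemma p3 (a : A) (W z : A ⊗[ℂ] A) :
    z * (TensorProduct.map (mulLeft ℂ a) LinearMap.id W)
      = (TensorProduct.map (mulRight ℂ a) LinearMap.id z) * W := by
  induction W using TensorProduct.induction_on with
  | zero => simp
  | tmul u v =>
      induction z using TensorProduct.induction_on with
      | zero => simp
      | tmul p q => simp [Algebra.TensorProduct.tmul_mul_tmul, mul_assoc]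
      | add x y hx hy => simp only [add_mul, map_add, hx, hy]
  | add x y hx hy => simp only [mul_add, map_add, hx, hy]

lemma p4 (b : A) (W z : A ⊗[ℂ] A) :
    (TensorProduct.map LinearMap.id (mulRight ℂ b) W) * z
      = W * (TensorProduct.map LinearMap.id (mulLeft ℂ b) z) := by
  induction W using TensorProduct.induction_on with
  | zero => simp
  | tmul u v =>
      induction z using TensorProduct.induction_on with
      | zero => simp
      | tmul p q => simp [Algebra.TensorProduct.tmul_mul_tmul, mul_assoc]
      | add x y hx hy => simp only [mul_add, map_add, hx, hy]
  | add x y hx hy => simp only [add_mul, map_add, hx, hy]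

lemma p5 (x : A) (W z : A ⊗[ℂ] A) :
    z * (TensorProduct.map LinearMap.id (mulLeft ℂ x) W)
      = (TensorProduct.map LinearMap.id (mulRight ℂ x) z) * W := by
  induction W using TensorProduct.induction_on with
  | zero => simp
  | tmul u v =>
      induction z using TensorProduct.induction_on with
      | zero => simp
      | tmul p q => simp [Algebra.TensorProduct.tmul_mul_tmul, mul_assoc]
      | add x' y hx hy => simp only [add_mul, map_add, hx, hy]
  | add x' y hx hy => simp only [mul_add, map_add, hx, hy]

lemma p6 (m : A) (W z : A ⊗[ℂ] A) :
    (TensorProduct.map (mulRight ℂ m) LinearMap.id W) * z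
      = W * (TensorProduct.map (mulLeft ℂ m) LinearMap.id z) := by
  induction W using TensorProduct.induction_on with
  | zero => simp
  | tmul u v =>
      induction z using TensorProduct.induction_on with
      | zero => simp
      | tmul p q => simp [Algebra.TensorProduct.tmul_mul_tmul, mul_assoc]
      | add x y hx hy => simp only [mul_add, map_add, hx, hy]
  | add x y hx hy => simp only [add_mul, map_add, hx, hy]

lemma p7 (m : A) (W z : A ⊗[ℂ] A) :
    z * (TensorProduct.map (mulRight ℂ m) LinearMap.id W)
      = TensorProduct.map (mulRight ℂ m) LinearMap.id (z * W) := by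
  induction W using TensorProduct.induction_on with
  | zero => simp
  | tmul u v =>
      induction z using TensorProduct.induction_on with
      | zero => simp
      | tmul p q => simp [Algebra.TensorProduct.tmul_mul_tmul, mul_assoc]
      | add x y hx hy => simp only [add_mul, map_add, hx, hy]
  | add x y hx hy => simp only [mul_add, map_add, hx, hy]

lemma p8 (x : A) (W z : A ⊗[ℂ] A) :
    (TensorProduct.map LinearMap.id (mulLeft ℂ x) W) * z
      = TensorProduct.map LinearMap.id (mulLeft ℂ x) (W * z) := by
  induction W using TensorProduct.induction_on with
  | zero => simp
  | tmul u v =>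
      induction z using TensorProduct.induction_on with
      | zero => simp
      | tmul p q => simp [Algebra.TensorProduct.tmul_mul_tmul, mul_assoc]
      | add x' y hx hy => simp only [mul_add, map_add, hx, hy]
  | add x' y hx hy => simp only [add_mul, map_add, hx, hy]

lemma p9 (m n : A) (z : A ⊗[ℂ] A) :
    (m ⊗ₜ[ℂ] n) * z = TensorProduct.map (mulLeft ℂ m) (mulLeft ℂ n) z := by
  induction z using TensorProduct.induction_on with
  | zero => simp
  | tmul p q => simp [Algebra.TensorProduct.tmul_mul_tmul]
  | add x y hx hy => simp only [mul_add, map_add, hx, hy]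

end Mul

end AQGProof

end

noncomputable section

namespace AQGProof

open TensorProduct LinearMap

section WithH

variable {A : Type*} [NonUnitalRing A] [Module ℂ A]
  [SMulCommClass ℂ A A] [IsScalarTower ℂ A A]

lemma nd_l (H : AQG A) {u v : A} (h : ∀ z : A, u * z = v * z) : u = v := by
  have := H.nondeg_l (u - v) (fun b => by rw [sub_mul, h, sub_self])
  exact sub_eq_zero.mp this

lemma nd_r (H : AQG A) {u v : A} (h : ∀ z : A, z * u = z * v) : u = v := by
  have := H.nondeg_r (u - v) (fun b => by rw [mul_sub, h, sub_self])
  exact sub_eq_zero.mp this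

lemma p10 (W : A ⊗[ℂ] A) (z1 z2 : A) :
    W * (z1 ⊗ₜ[ℂ] z2) = TensorProduct.map (mulRight ℂ z1) (mulRight ℂ z2) W := by
  induction W using TensorProduct.induction_on with
  | zero => simp
  | tmul p q => simp [Algebra.TensorProduct.tmul_mul_tmul]
  | add x y hx hy => simp only [add_mul, map_add, hx, hy]

/-- Non-degeneracy of `A ⊗ A` from the right. -/
lemma ndT_r (H : AQG A) {W W' : A ⊗[ℂ] A} (h : ∀ z : A ⊗[ℂ] A, W * z = W' * z) : W = W' := by
  have step1 : ∀ z2 : A, TensorProduct.map LinearMap.id (mulRight ℂ z2) W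
      = TensorProduct.map LinearMap.id (mulRight ℂ z2) W' := by
    intro z2
    apply sep_r_eq
    intro f
    rw [sliceR_map, sliceR_map, LinearMap.id_coe]
    apply nd_l H
    intro z1
    have h1 := congrArg (sliceR f) (h (z1 ⊗ₜ[ℂ] z2))
    rw [p10, p10, sliceR_map, sliceR_map] at h1
    simpa using h1
  apply sep_l_eq
  intro g
  apply nd_l H
  intro z2
  have h2 := congrArg (sliceL g) (step1 z2)
  rw [sliceL_map, sliceL_map] at h2
  simpa using h2

/-- Non-degeneracy of `A ⊗ A` from the left. -/
lemma ndT_l (H : AQG A) {W W' : A ⊗[ℂ] A} (h : ∀ z : A ⊗[ℂ] A, z * W = z * W') : W = W' := by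
  have step1 : ∀ z2 : A, TensorProduct.map LinearMap.id (mulLeft ℂ z2) W
      = TensorProduct.map LinearMap.id (mulLeft ℂ z2) W' := by
    intro z2
    apply sep_r_eq
    intro f
    rw [sliceR_map, sliceR_map, LinearMap.id_coe]
    apply nd_r H
    intro z1
    have h1 := congrArg (sliceR f) (h (z1 ⊗ₜ[ℂ] z2))
    rw [p9, p9, sliceR_map, sliceR_map] at h1
    simpa using h1
  apply sep_l_eq
  intro g
  apply nd_r H
  intro z2
  have h2 := congrArg (sliceL g) (step1 z2)
  rw [sliceL_map, sliceL_map] at h2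
  simpa using h2

lemma nd2 (H : AQG A) {W W' : A ⊗[ℂ] A} (h : ∀ z z' : A ⊗[ℂ] A, z * W * z' = z * W' * z') :
    W = W' := by
  apply ndT_l H
  intro z
  exact ndT_r H (fun z' => h z z')

end WithH

end AQGProof

end

noncomputable section

namespace AQGProof

open TensorProduct LinearMap

section Struct

variable {A : Type*} [NonUnitalRing A] [Module ℂ A]
  [SMulCommClass ℂ A A] [IsScalarTower ℂ A A]

lemma map_fst_snd (f g : A →ₗ[ℂ] A) (z : A ⊗[ℂ] A) :
    TensorProduct.map f LinearMap.id (TensorProduct.map LinearMap.id g z)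
      = TensorProduct.map f g z := by
  induction z using TensorProduct.induction_on with
  | zero => simp
  | tmul p q => simp
  | add x y hx hy => simp [hx, hy]

lemma map_snd_fst (f g : A →ₗ[ℂ] A) (z : A ⊗[ℂ] A) :
    TensorProduct.map LinearMap.id g (TensorProduct.map f LinearMap.id z)
      = TensorProduct.map f g z := by
  induction z using TensorProduct.induction_on with
  | zero => simp
  | tmul p q => simp
  | add x y hx hy => simp [hx, hy]

/-- `(a ⊗ 1)(Δx (1 ⊗ b)) = ((a ⊗ 1)Δx)(1 ⊗ b)`. -/
lemma I_lem (H : AQG A) (x b a : A) :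
    TensorProduct.map (mulLeft ℂ a) LinearMap.id (H.T2 (x ⊗ₜ[ℂ] b))
      = TensorProduct.map LinearMap.id (mulRight ℂ b) (H.T3 (x ⊗ₜ[ℂ] a)) := by
  apply nd2 H
  intro z z'
  calc z * TensorProduct.map (mulLeft ℂ a) LinearMap.id (H.T2 (x ⊗ₜ[ℂ] b)) * z'
      = (TensorProduct.map (mulRight ℂ a) LinearMap.id z) * (H.T2 (x ⊗ₜ[ℂ] b) * z') := by
        rw [p3, mul_assoc]
    _ = (TensorProduct.map (mulRight ℂ a) LinearMap.id z)
          * H.ΔL x (TensorProduct.map LinearMap.id (mulLeft ℂ b) z') := by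
        rw [H.ΔL_T2]
    _ = H.ΔR x (TensorProduct.map (mulRight ℂ a) LinearMap.id z)
          * (TensorProduct.map LinearMap.id (mulLeft ℂ b) z') := by
        rw [H.ΔLR]
    _ = TensorProduct.map LinearMap.id (mulRight ℂ b) (z * H.T3 (x ⊗ₜ[ℂ] a)) * z' := by
        rw [H.ΔR_T3, p4]
    _ = z * TensorProduct.map LinearMap.id (mulRight ℂ b) (H.T3 (x ⊗ₜ[ℂ] a)) * z' := by
        rw [p2]

/-- `Δ(yb)(d ⊗ 1) = Δ(y)(Δ(b)(d ⊗ 1))`. -/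
lemma L1_lem (H : AQG A) (y b d : A) :
    H.T1 ((y * b) ⊗ₜ[ℂ] d) = H.ΔL y (H.T1 (b ⊗ₜ[ℂ] d)) := by
  apply ndT_r H
  intro z
  rw [H.ΔL_T1, H.ΔL_mul, ← H.ΔL_T1, ← H.ΔL_assoc]

/-- `Δ(y)(m ⊗ n) = (Δ(y)(1 ⊗ n))(m ⊗ 1)` (as honest elements). -/
lemma L3_lem (H : AQG A) (y m n : A) :
    TensorProduct.map (mulRight ℂ m) LinearMap.id (H.T2 (y ⊗ₜ[ℂ] n))
      = H.ΔL y (m ⊗ₜ[ℂ] n) := by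
  apply ndT_r H
  intro z
  rw [p6, H.ΔL_T2, ← H.ΔL_assoc, p9, map_snd_fst]

/-- `(1 ⊗ x)(Δb (m ⊗ 1)) = ((1 ⊗ x)Δb)(m ⊗ 1)`. -/
lemma Jc_lem (H : AQG A) (b m x : A) :
    TensorProduct.map LinearMap.id (mulLeft ℂ x) (H.T1 (b ⊗ₜ[ℂ] m))
      = TensorProduct.map (mulRight ℂ m) LinearMap.id (H.T4 (b ⊗ₜ[ℂ] x)) := by
  apply nd2 H
  intro z z'
  calc z * TensorProduct.map LinearMap.id (mulLeft ℂ x) (H.T1 (b ⊗ₜ[ℂ] m)) * z'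
      = z * TensorProduct.map LinearMap.id (mulLeft ℂ x) (H.T1 (b ⊗ₜ[ℂ] m) * z') := by
        rw [mul_assoc, p8]
    _ = (TensorProduct.map LinearMap.id (mulRight ℂ x) z)
          * H.ΔL b (TensorProduct.map (mulLeft ℂ m) LinearMap.id z') := by
        rw [H.ΔL_T1, p5]
    _ = H.ΔR b (TensorProduct.map LinearMap.id (mulRight ℂ x) z)
          * (TensorProduct.map (mulLeft ℂ m) LinearMap.id z') := by rw [H.ΔLR]
    _ = TensorProduct.map (mulRight ℂ m) LinearMap.id (z * H.T4 (b ⊗ₜ[ℂ] x)) * z' := by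
        rw [H.ΔR_T4, p6]
    _ = z * TensorProduct.map (mulRight ℂ m) LinearMap.id (H.T4 (b ⊗ₜ[ℂ] x)) * z' := by
        rw [p7]

/-- `(1 ⊗ x)((m ⊗ 1)Δb) = (m ⊗ 1)((1 ⊗ x)Δb)`. -/
lemma Jc'_lem (H : AQG A) (b m x : A) :
    TensorProduct.map LinearMap.id (mulLeft ℂ x) (H.T3 (b ⊗ₜ[ℂ] m))
      = TensorProduct.map (mulLeft ℂ m) LinearMap.id (H.T4 (b ⊗ₜ[ℂ] x)) := by
  apply ndT_l H
  intro z
  rw [p5, p3, H.ΔR_T3, H.ΔR_T4, map_fst_snd, map_snd_fst]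

end Struct

end AQGProof

end

noncomputable section

namespace AQGProof

open TensorProduct LinearMap

section Coassoc

variable {A : Type*} [NonUnitalRing A] [Module ℂ A]
  [SMulCommClass ℂ A A] [IsScalarTower ℂ A A]

/-- The honest incarnation of `w ↦ Σ x⁽¹⁾ ⊗ Δ(x⁽²⁾)·w` (grouped the other way). -/
def Psi (H : AQG A) (x : A) : A ⊗[ℂ] A →ₗ[ℂ] A ⊗[ℂ] (A ⊗[ℂ] A) :=
  (TensorProduct.assoc ℂ A A A).toLinearMap
    ∘ₗ LinearMap.rTensor A H.T2.toLinearMap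
    ∘ₗ (TensorProduct.assoc ℂ A A A).symm.toLinearMap
    ∘ₗ (TensorProduct.leftComm ℂ A A A).toLinearMap
    ∘ₗ LinearMap.lTensor A (H.T2.toLinearMap ∘ₗ TensorProduct.mk ℂ A A x)

lemma leftComm_assoc_symm (m : A) (Z : A ⊗[ℂ] A) :
    (TensorProduct.assoc ℂ A A A).symm ((TensorProduct.leftComm ℂ A A A) (m ⊗ₜ[ℂ] Z))
      = LinearMap.rTensor A ((TensorProduct.mk ℂ A A).flip m) Z := by
  induction Z using TensorProduct.induction_on with
  | zero => simp
  | tmul p q => simp [TensorProduct.leftComm_tmul]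
  | add x y hx hy => simp [tmul_add, hx, hy]

lemma Psi_tmul (H : AQG A) (x m n : A) :
    Psi H x (m ⊗ₜ[ℂ] n)
      = (TensorProduct.assoc ℂ A A A) (LinearMap.rTensor A H.T2.toLinearMap
          (LinearMap.rTensor A ((TensorProduct.mk ℂ A A).flip m) (H.T2 (x ⊗ₜ[ℂ] n)))) := by
  simp only [Psi, LinearMap.coe_comp, Function.comp_apply, LinearEquiv.coe_coe,
    LinearMap.lTensor_tmul, LinearMap.coe_comp]
  rw [leftComm_assoc_symm]
  rfl

lemma assoc_map_snd_m (m : A) (W : A ⊗[ℂ] A) (q : A) :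
    (TensorProduct.assoc ℂ A A A) ((TensorProduct.map LinearMap.id (mulRight ℂ m) W) ⊗ₜ[ℂ] q)
      = LinearMap.lTensor A (TensorProduct.map (mulRight ℂ m) LinearMap.id)
          ((TensorProduct.assoc ℂ A A A) (W ⊗ₜ[ℂ] q)) := by
  induction W using TensorProduct.induction_on with
  | zero => simp
  | tmul r s => simp
  | add x y hx hy => simp [add_tmul, hx, hy]

lemma map_left_assoc (a' : A) (W : A ⊗[ℂ] A) (q : A) :
    TensorProduct.map (mulLeft ℂ a') LinearMap.id
        ((TensorProduct.assoc ℂ A A A) (W ⊗ₜ[ℂ] q))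
      = (TensorProduct.assoc ℂ A A A)
          ((TensorProduct.map (mulLeft ℂ a') LinearMap.id W) ⊗ₜ[ℂ] q) := by
  induction W using TensorProduct.induction_on with
  | zero => simp
  | tmul r s => simp
  | add x y hx hy => simp [add_tmul, hx, hy]

lemma CAc_core (H : AQG A) (a' m : A) (Z : A ⊗[ℂ] A) :
    LinearMap.lTensor A (TensorProduct.map (mulRight ℂ m) LinearMap.id)
        ((TensorProduct.assoc ℂ A A A)
          (LinearMap.rTensor A (H.T3.toLinearMap ∘ₗ (TensorProduct.mk ℂ A A).flip a') Z))
      = TensorProduct.map (mulLeft ℂ a') LinearMap.id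
          ((TensorProduct.assoc ℂ A A A)
            (LinearMap.rTensor A H.T2.toLinearMap
              (LinearMap.rTensor A ((TensorProduct.mk ℂ A A).flip m) Z))) := by
  induction Z using TensorProduct.induction_on with
  | zero => simp
  | tmul p q =>
      simp only [LinearMap.rTensor_tmul, LinearMap.coe_comp, Function.comp_apply,
        TensorProduct.mk_apply, LinearMap.flip_apply, LinearEquiv.coe_coe]
      rw [← assoc_map_snd_m, map_left_assoc, I_lem H p m a']
  | add x y hx hy => simp only [map_add, hx, hy]

lemma lTensor_map_snd {P : Type*} [AddCommGroup P] [Module ℂ P]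
    (f : A →ₗ[ℂ] P) (g : A →ₗ[ℂ] A) (W : A ⊗[ℂ] A) :
    LinearMap.lTensor A f (TensorProduct.map LinearMap.id g W)
      = LinearMap.lTensor A (f ∘ₗ g) W := by
  induction W using TensorProduct.induction_on with
  | zero => simp
  | tmul p q => simp
  | add x y hx hy => simp [hx, hy]

lemma map_left_lTensor {P : Type*} [AddCommGroup P] [Module ℂ P]
    (a' : A) (f : A →ₗ[ℂ] P) (W : A ⊗[ℂ] A) :
    TensorProduct.map (mulLeft ℂ a') LinearMap.id (LinearMap.lTensor A f W)
      = LinearMap.lTensor A f (TensorProduct.map (mulLeft ℂ a') LinearMap.id W) := by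
  induction W using TensorProduct.induction_on with
  | zero => simp
  | tmul p q => simp
  | add x y hx hy => simp [hx, hy]

/-- Coassociativity, natural form used in the antipode computation. -/
lemma CAc (H : AQG A) (x a' : A) (w : A ⊗[ℂ] A) :
    LinearMap.lTensor A (H.ΔL.flip w) (H.T3 (x ⊗ₜ[ℂ] a'))
      = TensorProduct.map (mulLeft ℂ a') LinearMap.id (Psi H x w) := by
  induction w using TensorProduct.induction_on with
  | zero => simp
  | tmul m n =>
      have h1 : H.ΔL.flip (m ⊗ₜ[ℂ] n)
          = (TensorProduct.map (mulRight ℂ m) LinearMap.id) ∘ₗ H.T2.toLinearMap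
              ∘ₗ (TensorProduct.mk ℂ A A).flip n := by
        apply LinearMap.ext
        intro y
        simp only [LinearMap.flip_apply, LinearMap.coe_comp, Function.comp_apply,
          TensorProduct.mk_apply, LinearEquiv.coe_coe]
        rw [L3_lem H]
      rw [h1, Psi_tmul]
      have h2 : LinearMap.lTensor A
          ((TensorProduct.map (mulRight ℂ m) LinearMap.id) ∘ₗ H.T2.toLinearMap
            ∘ₗ (TensorProduct.mk ℂ A A).flip n) (H.T3 (x ⊗ₜ[ℂ] a'))
          = LinearMap.lTensor A (TensorProduct.map (mulRight ℂ m) LinearMap.id)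
              (LinearMap.lTensor A (H.T2.toLinearMap ∘ₗ (TensorProduct.mk ℂ A A).flip n)
                (H.T3 (x ⊗ₜ[ℂ] a'))) := by
        rw [← LinearMap.comp_apply, ← LinearMap.lTensor_comp]
      rw [h2, ← H.coassoc a' n x, CAc_core H]
  | add y z hy hz =>
      simp only [map_add, LinearMap.lTensor_add, LinearMap.add_apply, hy, hz]

/-- Cover-stripping non-degeneracy on `A ⊗ (A ⊗ A)`. -/
lemma ndcover_eq (H : AQG A) {W W' : A ⊗[ℂ] (A ⊗[ℂ] A)}
    (h : ∀ a' : A, TensorProduct.map (mulLeft ℂ a') LinearMap.id W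
      = TensorProduct.map (mulLeft ℂ a') LinearMap.id W') : W = W' := by
  apply sep_r_eq
  intro g
  apply nd_r H
  intro a'
  have h1 := congrArg (sliceR g) (h a')
  rw [sliceR_map, sliceR_map] at h1
  simpa using h1

/-- The key coassociativity variant. -/
lemma CAv (H : AQG A) (x b d : A) :
    LinearMap.lTensor A (H.T1.toLinearMap ∘ₗ (TensorProduct.mk ℂ A A).flip d)
        (H.T2 (x ⊗ₜ[ℂ] b))
      = Psi H x (H.T1 (b ⊗ₜ[ℂ] d)) := by
  apply ndcover_eq H
  intro a'
  rw [map_left_lTensor, I_lem H x b a', lTensor_map_snd]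
  have h3 : (H.T1.toLinearMap ∘ₗ (TensorProduct.mk ℂ A A).flip d) ∘ₗ mulRight ℂ b
      = H.ΔL.flip (H.T1 (b ⊗ₜ[ℂ] d)) := by
    apply LinearMap.ext
    intro y
    simp only [LinearMap.coe_comp, Function.comp_apply, TensorProduct.mk_apply,
      LinearMap.flip_apply, LinearEquiv.coe_coe, LinearMap.mulRight_apply]
    rw [L1_lem H]
  rw [h3, CAc H]

end Coassoc

end AQGProof

end

noncomputable section

namespace AQGProof

open TensorProduct LinearMap

section Antipode

variable {A : Type*} [NonUnitalRing A] [Module ℂ A]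
  [SMulCommClass ℂ A A] [IsScalarTower ℂ A A]

/-- `p ⊗ w ↦ S(p) · (ι ⊗ φ)(w)`. -/
def M1 (H : AQG A) : A ⊗[ℂ] (A ⊗[ℂ] A) →ₗ[ℂ] A :=
  (LinearMap.mul' ℂ A) ∘ₗ TensorProduct.map H.S.toLinearMap (sliceR H.phi)

lemma M1_tmul (H : AQG A) (p : A) (W : A ⊗[ℂ] A) :
    M1 H (p ⊗ₜ[ℂ] W) = H.S p * sliceR H.phi W := by
  simp [M1]

lemma M1_lTensor (H : AQG A) (d : A) (Z : A ⊗[ℂ] A) :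
    M1 H (LinearMap.lTensor A (H.T1.toLinearMap ∘ₗ (TensorProduct.mk ℂ A A).flip d) Z)
      = H.S (sliceR H.phi Z) * d := by
  induction Z using TensorProduct.induction_on with
  | zero => simp
  | tmul p q =>
      simp only [LinearMap.lTensor_tmul, LinearMap.coe_comp, Function.comp_apply,
        TensorProduct.mk_apply, LinearMap.flip_apply, LinearEquiv.coe_coe]
      rw [M1_tmul, H.left_inv_T1]
      simp [mul_smul_comm, smul_mul_assoc]
  | add x y hx hy => simp only [map_add, hx, hy, add_mul]

lemma M1_assoc_tmul (H : AQG A) (W : A ⊗[ℂ] A) (q : A) :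
    M1 H ((TensorProduct.assoc ℂ A A A) (W ⊗ₜ[ℂ] q))
      = H.phi q • (LinearMap.mul' ℂ A (LinearMap.rTensor A H.S.toLinearMap W)) := by
  induction W using TensorProduct.induction_on with
  | zero => simp
  | tmul u v =>
      simp only [TensorProduct.assoc_tmul, LinearMap.rTensor_tmul, LinearEquiv.coe_coe]
      rw [M1_tmul]
      simp [mul_smul_comm]
  | add x y hx hy => simp only [add_tmul, map_add, hx, hy, smul_add]

lemma M1_Psi (H : AQG A) (x : A) (w : A ⊗[ℂ] A) :
    M1 H (Psi H x w) = sliceR (H.phi ∘ₗ mulLeft ℂ x) w := by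
  induction w using TensorProduct.induction_on with
  | zero => simp
  | tmul m n =>
      rw [Psi_tmul]
      have core : ∀ Z : A ⊗[ℂ] A,
          M1 H ((TensorProduct.assoc ℂ A A A) (LinearMap.rTensor A H.T2.toLinearMap
            (LinearMap.rTensor A ((TensorProduct.mk ℂ A A).flip m) Z)))
          = ev2 H.counit H.phi Z • m := by
        intro Z
        induction Z using TensorProduct.induction_on with
        | zero => simp
        | tmul p q =>
            simp only [LinearMap.rTensor_tmul, TensorProduct.mk_apply, LinearMap.flip_apply,
              LinearEquiv.coe_coe]
            rw [M1_assoc_tmul, H.antipode_l, ev2_tmul]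
            rw [smul_smul, mul_comm]
        | add z1 z2 h1 h2 => simp only [map_add, h1, h2, add_smul]
      rw [core (H.T2 (x ⊗ₜ[ℂ] n)), ev2_eq_sliceL, H.counit_T2]
      simp
  | add y z hy hz => simp only [map_add, hy, hz]

/-- Main identity, multiplied form :
`S((ι ⊗ φ)(Δx(1 ⊗ b))) d = (ι ⊗ φ(x ·))(Δb(d ⊗ 1))`. -/
lemma IId (H : AQG A) (x b d : A) :
    H.S (sliceR H.phi (H.T2 (x ⊗ₜ[ℂ] b))) * d
      = sliceR (H.phi ∘ₗ mulLeft ℂ x) (H.T1 (b ⊗ₜ[ℂ] d)) := by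
  rw [← M1_lTensor H d (H.T2 (x ⊗ₜ[ℂ] b)), CAv H, M1_Psi H]

/-- The key antipode identity `S((ι ⊗ φ)(Δx(1 ⊗ b))) = (ι ⊗ φ)((1 ⊗ x)Δb)`. -/
lemma II (H : AQG A) (x b : A) :
    H.S (sliceR H.phi (H.T2 (x ⊗ₜ[ℂ] b))) = sliceR H.phi (H.T4 (b ⊗ₜ[ℂ] x)) := by
  apply nd_l H
  intro d
  rw [IId H]
  have h1 : sliceR (H.phi ∘ₗ mulLeft ℂ x) (H.T1 (b ⊗ₜ[ℂ] d))
      = sliceR H.phi (TensorProduct.map LinearMap.id (mulLeft ℂ x) (H.T1 (b ⊗ₜ[ℂ] d))) := by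
    rw [sliceR_map]
    rfl
  rw [h1, Jc_lem H b d x, sliceR_map]
  rfl

end Antipode

end AQGProof

end

noncomputable section

namespace AQGProof

open TensorProduct LinearMap

section Final

variable {A : Type*} [NonUnitalRing A] [Module ℂ A]
  [SMulCommClass ℂ A A] [IsScalarTower ℂ A A]

lemma Sinv_mul (H : AQG A) (u v : A) :
    H.S.symm (u * v) = H.S.symm v * H.S.symm u := by
  apply H.S.injective
  rw [H.S_mul]
  simp

lemma phi_mul_sliceL (H : AQG A) (x : A) (θ : A →ₗ[ℂ] ℂ) (W : A ⊗[ℂ] A) :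
    H.phi (x * sliceL θ W) = ev2 θ (H.phi ∘ₗ mulLeft ℂ x) W := by
  induction W using TensorProduct.induction_on with
  | zero => simp
  | tmul u v => simp [mul_smul_comm]
  | add y z hy hz => simp only [map_add, mul_add, hy, hz]

/-- The pair `(b, c)` realising the product `(ωa)·(φ b) = φ c` in the dual. -/
lemma Ract_mulLeft_eq_lFun (H : AQG A) (ω : A →ₗ[ℂ] ℂ) (a b : A) :
    H.Ract (ω ∘ₗ mulLeft ℂ a) b
      = H.lFun (sliceL (ω ∘ₗ H.S.symm.toLinearMap) (H.T1 (b ⊗ₜ[ℂ] H.S a))) := by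
  apply LinearMap.ext
  intro x
  simp only [AQG.Ract, AQG.lFun, LinearMap.coe_comp, Function.comp_apply,
    TensorProduct.mk_apply, LinearMap.flip_apply, LinearEquiv.coe_coe,
    LinearMap.mulRight_apply, LinearMap.mulLeft_apply]
  -- LHS : ω (a * sliceR φ (T2 (x ⊗ b)))
  have hII : sliceR H.phi (H.T2 (x ⊗ₜ[ℂ] b))
      = H.S.symm (sliceR H.phi (H.T4 (b ⊗ₜ[ℂ] x))) := by
    rw [LinearEquiv.eq_symm_apply]
    exact II H x b
  rw [hII]
  have h1 : ω (a * H.S.symm (sliceR H.phi (H.T4 (b ⊗ₜ[ℂ] x))))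
      = ev2 ((ω ∘ₗ H.S.symm.toLinearMap) ∘ₗ mulRight ℂ (H.S a)) H.phi
          (H.T4 (b ⊗ₜ[ℂ] x)) := by
    rw [ev2_eq_sliceR]
    simp only [LinearMap.coe_comp, Function.comp_apply, LinearEquiv.coe_coe,
      LinearMap.mulRight_apply]
    rw [Sinv_mul]
    simp
  rw [h1]
  have h2 : ev2 ((ω ∘ₗ H.S.symm.toLinearMap) ∘ₗ mulRight ℂ (H.S a)) H.phi
        (H.T4 (b ⊗ₜ[ℂ] x))
      = ev2 (ω ∘ₗ H.S.symm.toLinearMap) H.phi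
          (TensorProduct.map (mulRight ℂ (H.S a)) LinearMap.id (H.T4 (b ⊗ₜ[ℂ] x))) := by
    rw [ev2_map, LinearMap.comp_id]
  rw [h2, ← Jc_lem H b (H.S a) x, ev2_map, LinearMap.comp_id, phi_mul_sliceL H x]

lemma Ract_mulRight_eq_lFun (H : AQG A) (ω : A →ₗ[ℂ] ℂ) (a b : A) :
    H.Ract (ω ∘ₗ mulRight ℂ a) b
      = H.lFun (sliceL (ω ∘ₗ H.S.symm.toLinearMap) (H.T3 (b ⊗ₜ[ℂ] H.S a))) := by
  apply LinearMap.ext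
  intro x
  simp only [AQG.Ract, AQG.lFun, LinearMap.coe_comp, Function.comp_apply,
    TensorProduct.mk_apply, LinearMap.flip_apply, LinearEquiv.coe_coe,
    LinearMap.mulRight_apply, LinearMap.mulLeft_apply]
  have hII : sliceR H.phi (H.T2 (x ⊗ₜ[ℂ] b))
      = H.S.symm (sliceR H.phi (H.T4 (b ⊗ₜ[ℂ] x))) := by
    rw [LinearEquiv.eq_symm_apply]
    exact II H x b
  rw [hII]
  have h1 : ω (H.S.symm (sliceR H.phi (H.T4 (b ⊗ₜ[ℂ] x))) * a)
      = ev2 ((ω ∘ₗ H.S.symm.toLinearMap) ∘ₗ mulLeft ℂ (H.S a)) H.phi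
          (H.T4 (b ⊗ₜ[ℂ] x)) := by
    rw [ev2_eq_sliceR]
    simp only [LinearMap.coe_comp, Function.comp_apply, LinearEquiv.coe_coe,
      LinearMap.mulLeft_apply]
    rw [Sinv_mul]
    simp
  rw [h1]
  have h2 : ev2 ((ω ∘ₗ H.S.symm.toLinearMap) ∘ₗ mulLeft ℂ (H.S a)) H.phi
        (H.T4 (b ⊗ₜ[ℂ] x))
      = ev2 (ω ∘ₗ H.S.symm.toLinearMap) H.phi
          (TensorProduct.map (mulLeft ℂ (H.S a)) LinearMap.id (H.T4 (b ⊗ₜ[ℂ] x))) := by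
    rw [ev2_map, LinearMap.comp_id]
  rw [h2, ← Jc'_lem H b (H.S a) x, ev2_map, LinearMap.comp_id, phi_mul_sliceL H x]

lemma phi_c_left (H : AQG A) (ω : A →ₗ[ℂ] ℂ) (a b : A) :
    H.phi (sliceL (ω ∘ₗ H.S.symm.toLinearMap) (H.T1 (b ⊗ₜ[ℂ] H.S a)))
      = ω a * H.phi b := by
  rw [← ev2_eq_sliceL, ev2_eq_sliceR, H.left_inv_T1]
  simp [mul_comm]

lemma phi_c_right (H : AQG A) (ω : A →ₗ[ℂ] ℂ) (a b : A) :
    H.phi (sliceL (ω ∘ₗ H.S.symm.toLinearMap) (H.T3 (b ⊗ₜ[ℂ] H.S a)))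
      = ω a * H.phi b := by
  rw [← ev2_eq_sliceL, ev2_eq_sliceR, H.left_inv_T3]
  simp [mul_comm]

lemma exists_phi_ne (H : AQG A) : ∃ b : A, H.phi b ≠ 0 := by
  by_contra h
  push_neg at h
  exact H.phi_ne (LinearMap.ext fun b => by simpa using h b)

end Final

end AQGProof

end

/-- For every `ω ∈ A'` and `a ∈ A`, the functionals `ωa : x ↦ ω(ax)`
and `aω : x ↦ ω(xa)` belong to `M(Â)` and the extended dual counit satisfies
`ε̂(ωa) = ω(a)` and `ε̂(aω) = ω(a)`.  The extension of `ε̂` to `M(Â)` is characterized by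
`ε̂(T) ε̂(η) = ε̂(T η)` for `η ∈ Â`, where `ε̂(φb) = φ(b)`. -/
theorem AQG.dual_counit_formula {A : Type*} [NonUnitalRing A] [Module ℂ A]
    [SMulCommClass ℂ A A] [IsScalarTower ℂ A A] (H : AQG A)
    (ω : A →ₗ[ℂ] ℂ) (a : A) (e e' : ℂ)
    -- `e = ε̂(ωa)` : for every `b` with `(ωa)(φb) = φc` one has `e φ(b) = φ(c)`
    (he : ∀ b c : A, H.Ract (ω ∘ₗ LinearMap.mulLeft ℂ a) b = H.lFun c →
      e * H.phi b = H.phi c)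
    -- `e' = ε̂(aω)`
    (he' : ∀ b c : A, H.Ract (ω ∘ₗ LinearMap.mulRight ℂ a) b = H.lFun c →
      e' * H.phi b = H.phi c) :
    e = ω a ∧ e' = ω a := by
  obtain ⟨b, hb⟩ := AQGProof.exists_phi_ne H
  constructor
  · have h1 := he b _ (AQGProof.Ract_mulLeft_eq_lFun H ω a b)
    rw [AQGProof.phi_c_left H ω a b] at h1
    exact mul_right_cancel₀ hb h1
  · have h1 := he' b _ (AQGProof.Ract_mulRight_eq_lFun H ω a b)
    rw [AQGProof.phi_c_right H ω a b] at h1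
    exact mul_right_cancel₀ hb h1
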